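/- Let (.|.) be a nonzero skew-symmetric bilinear form on a two-dimensional vector space V and f a traceless endomorphism of V. Then for all u, v, w in V: (u|v)·f(w) = −(f(u)|w)·v + (f(v)|w)·u. -/

import Mathlib

theorem alternating_form_sl2_identity
    (F : Type*) [Field F] (h2 : (2 : F) ≠ 0)
    (V : Type*) [AddCommGroup V] [Module F V] [FiniteDimensional F V]
    (hdim : Module.finrank F V = 2)
    (B : V →ₗ[F] V →ₗ[F] F)
    (halt : ∀ v : V, B v v = 0)
    (hne : B ≠ 0)
    (f : V →ₗ[F] V)
    (hf : LinearMap.trace F V f = 0)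
    (u v w : V) :
    B u v • f w = -(B (f u) w) • v + (B (f v) w) • u := by
  have hskew : ∀ x y : V, B y x = - B x y := by
    intro x y
    have h := halt (x + y)
    simp only [map_add, LinearMap.add_apply, halt] at h
    linear_combination h
  let b : Module.Basis (Fin 2) F V := Module.finBasisOfFinrankEq F V hdim
  have htr : LinearMap.toMatrix b b f 0 0 + LinearMap.toMatrix b b f 1 1 = 0 := by
    rw [LinearMap.trace_eq_matrix_trace F b f] at hf
    rwa [Matrix.trace, Fin.sum_univ_two] at hf
  have hcoord : ∀ x : V, x = b.repr x 0 • b 0 + b.repr x 1 • b 1 := by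
    intro x
    rw [← Fin.sum_univ_two (f := fun i => b.repr x i • b i)]
    exact (b.sum_repr x).symm
  have hfb : ∀ j, f (b j) = LinearMap.toMatrix b b f 0 j • b 0 +
      LinearMap.toMatrix b b f 1 j • b 1 := by
    intro j
    simp only [LinearMap.toMatrix_apply]
    exact hcoord (f (b j))
  rw [hcoord u, hcoord v, hcoord w]
  simp only [map_add, map_smul, LinearMap.add_apply, LinearMap.smul_apply, smul_eq_mul,
    hfb, smul_add, smul_smul, halt, hskew (b 0) (b 1)]
  match_scalars
  · linear_combination (B (b 0) (b 1)) * (b.repr u 0 * b.repr v 1 - b.repr v 0 * b.repr u 1) *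
      b.repr w 0 * htr
  · linear_combination (B (b 0) (b 1)) * (b.repr u 0 * b.repr v 1 - b.repr v 0 * b.repr u 1) *
      b.repr w 1 * htr
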